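/- Let Θ ∈ {0,1}^{v×G} be a membership matrix (each row has exactly one entry equal to 1), let B ∈ ℝ^{G×G} be symmetric of full rank, and set S = ΘBΘ^⊤. Let D_B = diag(BΘ^⊤1_v) and suppose all entries of D_B and of the degree matrix D = diag(S1_v) are strictly positive. Then the normalized Laplacian L = D^{-1/2} S D^{-1/2} factors as L = Θ B_L Θ^⊤ with B_L = D_B^{-1/2} B D_B^{-1/2} symmetric and of full rank G. -/

import Mathlib

open Matrix

/-- The diagonal matrix `D^{-1/2}` built from the row sums (degrees) of `S`. -/
noncomputable def invSqrtDeg {v : ℕ} (S : Matrix (Fin v) (Fin v) ℝ) :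
    Matrix (Fin v) (Fin v) ℝ :=
  Matrix.diagonal (fun i => (Real.sqrt (∑ j, S i j))⁻¹)

/-- SBM Laplacian factorization: for a membership matrix `Θ` (encoded by the
community assignment `c`), a symmetric full-rank `B`, and `S = ΘBΘᵀ` with
strictly positive `D_B = diag(BΘᵀ1)` and degrees, the normalized Laplacian
`L = D^{-1/2}SD^{-1/2}` factors as `L = Θ B_L Θᵀ` with
`B_L = D_B^{-1/2} B D_B^{-1/2}` symmetric of full rank. -/
theorem sbm_laplacian_factorization {v G : ℕ}
    (Θ : Matrix (Fin v) (Fin G) ℝ) (c : Fin v → Fin G)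
    (B : Matrix (Fin G) (Fin G) ℝ)
    (hΘ : ∀ (i : Fin v) (g : Fin G), Θ i g = if g = c i then 1 else 0)
    (hB : B.transpose = B) (hBrank : B.det ≠ 0)
    (S : Matrix (Fin v) (Fin v) ℝ) (hS : S = Θ * B * Θ.transpose)
    (dB : Fin G → ℝ)
    (hdB : ∀ g, dB g = ∑ g', B g g' * (∑ i : Fin v, Θ i g'))
    (hdBpos : ∀ g, 0 < dB g)
    (hdegpos : ∀ i : Fin v, 0 < ∑ j, S i j) :
    ∃ BL : Matrix (Fin G) (Fin G) ℝ,
      BL = Matrix.diagonal (fun g => (Real.sqrt (dB g))⁻¹) * B *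
        Matrix.diagonal (fun g => (Real.sqrt (dB g))⁻¹) ∧
      invSqrtDeg S * S * invSqrtDeg S = Θ * BL * Θ.transpose ∧
      BL.transpose = BL ∧ BL.det ≠ 0 := by
  set f : Fin G → ℝ := fun g => (Real.sqrt (dB g))⁻¹ with hf
  refine ⟨Matrix.diagonal f * B * Matrix.diagonal f, rfl, ?_, ?_, ?_⟩
  · -- row sums of S
    have hSentry : ∀ i j, S i j = ∑ g', B (c i) g' * Θ j g' := by
      intro i j
      simp only [hS, Matrix.mul_apply, Matrix.transpose_apply]
      refine Finset.sum_congr rfl fun g' _ => ?_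
      have h1 : ∀ g, Θ i g * B g g' = if g = c i then B (c i) g' else 0 := by
        intro g; rw [hΘ]; split <;> simp_all
      simp only [h1, Finset.sum_ite_eq' Finset.univ (c i)]
      simp
    have hrow : ∀ i, ∑ j, S i j = dB (c i) := by
      intro i
      simp only [hSentry, hdB]
      rw [Finset.sum_comm]
      exact Finset.sum_congr rfl fun g' _ => by rw [← Finset.mul_sum]
    have hD : invSqrtDeg S = Matrix.diagonal (fun i => f (c i)) := by
      ext i j
      unfold invSqrtDeg
      simp only [Matrix.diagonal_apply, hrow]
      rfl
    have hcomm : Matrix.diagonal (fun i => f (c i)) * Θ = Θ * Matrix.diagonal f := by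
      ext i g
      simp only [Matrix.diagonal_mul, Matrix.mul_diagonal, hΘ]
      split <;> simp_all
    have hcomm' : Θ.transpose * Matrix.diagonal (fun i => f (c i)) =
        Matrix.diagonal f * Θ.transpose := by
      have := congrArg Matrix.transpose hcomm
      simpa [Matrix.transpose_mul, Matrix.diagonal_transpose] using this
    rw [hD, hS]
    calc Matrix.diagonal (fun i => f (c i)) * (Θ * B * Θ.transpose) *
          Matrix.diagonal (fun i => f (c i))
        = (Matrix.diagonal (fun i => f (c i)) * Θ) * B *
          (Θ.transpose * Matrix.diagonal (fun i => f (c i))) := by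
          simp only [Matrix.mul_assoc]
      _ = Θ * (Matrix.diagonal f * B * Matrix.diagonal f) * Θ.transpose := by
          rw [hcomm, hcomm']; simp only [Matrix.mul_assoc]
  · simp [Matrix.transpose_mul, Matrix.diagonal_transpose, hB, Matrix.mul_assoc]
  · have hfne : ∀ g, f g ≠ 0 := fun g =>
      inv_ne_zero (ne_of_gt (Real.sqrt_pos.mpr (hdBpos g)))
    simp [Matrix.det_mul, Matrix.det_diagonal, Finset.prod_ne_zero_iff, hfne, hBrank]
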